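/- Let Ω' = [-1,1]^{n-1} ⊂ ℝ^{n-1}. For every λ ≥ 0 there exists an L²-normalized function f_λ on ℝ^{n-1} such that: (1) supp f_λ ⊂ Ω'; (2) the Fourier transform of f_λ is nonnegative everywhere; (3) there is a constant c₁ > 0 depending only on n such that the Fourier transform of f_λ satisfies f̂_λ(ξ') ≥ c₁ for all ξ' with |ξ' − η'_λ| ≤ 1, where η'_λ = (λ, 0, …, 0). -/

import Mathlib

open MeasureTheory Complex

/-- The Fourier transform with the convention `f̂(ξ) = ∫ f(x) e^{-i⟨x,ξ⟩} dx`. -/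
noncomputable def fourierNC {m : ℕ} (f : EuclideanSpace ℝ (Fin m) → ℂ)
    (ξ : EuclideanSpace ℝ (Fin m)) : ℂ :=
  ∫ x, Complex.exp (-(Complex.I * ((inner ℝ x ξ : ℝ) : ℂ))) * f x

/-- for every `λ ≥ 0` there is an `L²`-normalized function supported in the
cube `[-1,1]^{n-1}`, with everywhere nonnegative Fourier transform, whose Fourier transform
is bounded below by a dimensional constant `c₁ > 0` on the unit ball around `η'_λ = (λ,0,…,0)`. -/

noncomputable def tri (x : ℝ) : ℝ := max (1 - |x|) 0

lemma tri_nonneg (x : ℝ) : 0 ≤ tri x := le_max_right _ _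

lemma tri_continuous : Continuous tri := by
  unfold tri; fun_prop

lemma tri_eq_zero {x : ℝ} (hx : 1 ≤ |x|) : tri x = 0 := by
  unfold tri; simp only [max_eq_right_iff]; linarith

lemma tri_le_one (x : ℝ) : tri x ≤ 1 := by
  unfold tri
  rcases le_total (1 - |x|) 0 with h | h
  · simp [max_eq_right h]
  · rw [max_eq_left h]; have := abs_nonneg x; linarith

noncomputable def Kre (s : ℝ) : ℝ := if s = 0 then 1 else 2 * (1 - Real.cos s) / s ^ 2

lemma Kre_nonneg (s : ℝ) : 0 ≤ Kre s := by
  unfold Kre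
  split_ifs with h
  · norm_num
  · have h1 : Real.cos s ≤ 1 := Real.cos_le_one s
    have hs2 : (0:ℝ) < s ^ 2 := by nlinarith [abs_pos.mpr h, _root_.sq_abs s]
    apply div_nonneg _ hs2.le
    linarith

lemma Kre_lower {s : ℝ} (hs : |s| ≤ 1) : 43 / 48 ≤ Kre s := by
  unfold Kre
  split_ifs with h
  · norm_num
  · have hb := Real.cos_bound hs
    have h4 : |s| ^ 4 ≤ |s| ^ 2 := by
      have := abs_nonneg s
      calc |s| ^ 4 = |s|^2 * |s|^2 := by ring
        _ ≤ 1 * |s|^2 := by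
              apply mul_le_mul_of_nonneg_right _ (by positivity)
              nlinarith [abs_nonneg s]
        _ = |s|^2 := by ring
    have hsq : |s| ^ 2 = s ^ 2 := _root_.sq_abs s
    have h5 : Real.cos s - (1 - s ^ 2 / 2) ≤ s ^ 2 * (5 / 96) := by
      have := abs_le.mp hb
      nlinarith [this.2]
    have hs2 : (0:ℝ) < s ^ 2 := by positivity
    rw [le_div_iff₀ hs2]
    nlinarith

lemma c_ne_zero {s : ℝ} (hs : s ≠ 0) : Complex.I * s ≠ 0 :=
  mul_ne_zero Complex.I_ne_zero (Complex.ofReal_ne_zero.mpr hs)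

lemma antider_pos {s : ℝ} (hs : s ≠ 0) (x : ℝ) :
    HasDerivAt (fun y : ℝ => ((1 / (Complex.I * s) ^ 2 - 1 / (Complex.I * s)
        + y / (Complex.I * s)) * Complex.exp (-(Complex.I * s * y))))
      ((1 - (x : ℂ)) * Complex.exp (-(Complex.I * s * x))) x := by
  set c : ℂ := Complex.I * s with hc
  have hcne : c ≠ 0 := c_ne_zero hs
  clear_value c
  have a1 : HasDerivAt (fun z : ℂ => z / c) (1 / c) (x : ℂ) :=
    (hasDerivAt_id (x : ℂ)).div_const c
  have h1 : HasDerivAt (fun z : ℂ => 1 / c ^ 2 - 1 / c + z / c) (1 / c) (x : ℂ) :=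
    a1.const_add (1 / c ^ 2 - 1 / c)
  have h0 : HasDerivAt (fun z : ℂ => -(c * z)) (-c) (x : ℂ) := by
    have h := ((hasDerivAt_id (x : ℂ)).const_mul c).neg; simp only [mul_one] at h; exact h
  have h2 : HasDerivAt (fun z : ℂ => Complex.exp (-(c * z)))
      (Complex.exp (-(c * (x : ℂ))) * (-c)) (x : ℂ) := h0.cexp
  have h3 := (h1.mul h2).comp_ofReal
  have key : (1 - (x : ℂ)) * Complex.exp (-(c * x)) =
      1 / c * Complex.exp (-(c * (x : ℂ))) +
        (1 / c ^ 2 - 1 / c + (x : ℂ) / c) * (Complex.exp (-(c * (x : ℂ))) * (-c)) := by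
    rw [show -(c * (x : ℂ)) = -((x : ℂ) * c) by ring]
    have h5 : c ^ 5 * c⁻¹ ^ 5 = 1 := by
      rw [← mul_pow, mul_inv_cancel₀ hcne, one_pow]
    field_simp
    ring
  rw [key]
  exact h3

lemma antider_neg {s : ℝ} (hs : s ≠ 0) (x : ℝ) :
    HasDerivAt (fun y : ℝ => ((-(1 / (Complex.I * s) ^ 2) - 1 / (Complex.I * s)
        - y / (Complex.I * s)) * Complex.exp (-(Complex.I * s * y))))
      ((1 + (x : ℂ)) * Complex.exp (-(Complex.I * s * x))) x := by
  set c : ℂ := Complex.I * s with hc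
  have hcne : c ≠ 0 := c_ne_zero hs
  clear_value c
  have a1 : HasDerivAt (fun z : ℂ => z / c) (1 / c) (x : ℂ) :=
    (hasDerivAt_id (x : ℂ)).div_const c
  have h1 : HasDerivAt (fun z : ℂ => -(1 / c ^ 2) - 1 / c - z / c) (-(1 / c)) (x : ℂ) :=
    a1.const_sub (-(1 / c ^ 2) - 1 / c)
  have h0 : HasDerivAt (fun z : ℂ => -(c * z)) (-c) (x : ℂ) := by
    have h := ((hasDerivAt_id (x : ℂ)).const_mul c).neg; simp only [mul_one] at h; exact h
  have h2 : HasDerivAt (fun z : ℂ => Complex.exp (-(c * z)))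
      (Complex.exp (-(c * (x : ℂ))) * (-c)) (x : ℂ) := h0.cexp
  have h3 := (h1.mul h2).comp_ofReal
  have key : (1 + (x : ℂ)) * Complex.exp (-(c * x)) =
      -(1 / c) * Complex.exp (-(c * (x : ℂ))) +
        (-(1 / c ^ 2) - 1 / c - (x : ℂ) / c) * (Complex.exp (-(c * (x : ℂ))) * (-c)) := by
    rw [show -(c * (x : ℂ)) = -((x : ℂ) * c) by ring]
    have h5 : c ^ 5 * c⁻¹ ^ 5 = 1 := by
      rw [← mul_pow, mul_inv_cancel₀ hcne, one_pow]
    field_simp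
    ring
  rw [key]
  exact h3

lemma tri_eq_on_right {x : ℝ} (hx : x ∈ Set.Icc (0:ℝ) 1) : tri x = 1 - x := by
  unfold tri
  rw [_root_.abs_of_nonneg hx.1, max_eq_left (by linarith [hx.2])]

lemma tri_eq_on_left {x : ℝ} (hx : x ∈ Set.Icc (-1:ℝ) 0) : tri x = 1 + x := by
  unfold tri
  rw [abs_of_nonpos hx.2, max_eq_left (by linarith [hx.1])]
  ring

lemma tri_int_right : ∫ x in (0:ℝ)..1, tri x = 1/2 := by
  rw [intervalIntegral.integral_congr (g := fun x : ℝ => 1 - x)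
    (fun x hx => tri_eq_on_right (by rwa [Set.uIcc_of_le (by norm_num)] at hx))]
  rw [intervalIntegral.integral_sub intervalIntegrable_const (continuous_id'.intervalIntegrable _ _)]
  simp [integral_id]
  norm_num

lemma tri_int_left : ∫ x in (-1:ℝ)..0, tri x = 1/2 := by
  rw [intervalIntegral.integral_congr (g := fun x : ℝ => 1 + x)
    (fun x hx => tri_eq_on_left (by rwa [Set.uIcc_of_le (by norm_num)] at hx))]
  rw [intervalIntegral.integral_add intervalIntegrable_const (continuous_id'.intervalIntegrable _ _)]
  simp [integral_id]
  norm_num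

lemma tri_sq_int_right : ∫ x in (0:ℝ)..1, tri x ^ 2 = 1/3 := by
  rw [intervalIntegral.integral_congr (g := fun x : ℝ => (1 - x)^2)
    (fun x hx => by rw [tri_eq_on_right (by rwa [Set.uIcc_of_le (by norm_num)] at hx)])]
  have := intervalIntegral.integral_comp_sub_left (a := (0:ℝ)) (b := 1)
    (fun x : ℝ => x ^ 2) 1
  rw [this]
  norm_num [integral_pow]

lemma tri_sq_int_left : ∫ x in (-1:ℝ)..0, tri x ^ 2 = 1/3 := by
  rw [intervalIntegral.integral_congr (g := fun x : ℝ => (1 + x)^2)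
    (fun x hx => by rw [tri_eq_on_left (by rwa [Set.uIcc_of_le (by norm_num)] at hx)])]
  have := intervalIntegral.integral_comp_add_right (a := (-1:ℝ)) (b := 0)
    (fun x : ℝ => x ^ 2) 1
  simp only [show ∀ x : ℝ, (1 + x)^2 = (x + 1)^2 from fun x => by ring]
  rw [this]
  norm_num [integral_pow]

lemma final_comb {c : ℂ} (hcne : c ≠ 0) {s : ℝ} (hs : s ≠ 0)
    (hcc : c ^ 2 = -((s : ℂ) ^ 2))
    (h2cos : Complex.exp (-(c * ((1:ℝ) : ℂ))) + Complex.exp (-(c * ((-1:ℝ) : ℂ)))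
      = 2 * (Real.cos s : ℂ)) :
    ((-(1/c^2) - 1/c - ((0:ℝ):ℂ)/c) * Complex.exp (-(c * ((0:ℝ):ℂ)))
      - (-(1/c^2) - 1/c - ((-1:ℝ):ℂ)/c) * Complex.exp (-(c * ((-1:ℝ):ℂ))))
    + ((1/c^2 - 1/c + ((1:ℝ):ℂ)/c) * Complex.exp (-(c * ((1:ℝ):ℂ)))
      - (1/c^2 - 1/c + ((0:ℝ):ℂ)/c) * Complex.exp (-(c * ((0:ℝ):ℂ))))
    = ((2 * (1 - Real.cos s) / s ^ 2 : ℝ) : ℂ) := by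
  have hsne : (s : ℂ) ≠ 0 := Complex.ofReal_ne_zero.mpr hs
  set E1 := Complex.exp (-(c * ((1:ℝ) : ℂ))) with hE1
  set E2 := Complex.exp (-(c * ((-1:ℝ) : ℂ))) with hE2
  have hE0 : Complex.exp (-(c * ((0:ℝ) : ℂ))) = 1 := by norm_num
  rw [hE0]
  have h7 : c ^ 7 * c⁻¹ ^ 7 = 1 := by
    rw [← mul_pow, mul_inv_cancel₀ hcne, one_pow]
  have expand : ((-(1/c^2) - 1/c - ((0:ℝ):ℂ)/c) * 1 - (-(1/c^2) - 1/c - ((-1:ℝ):ℂ)/c) * E2)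
      + ((1/c^2 - 1/c + ((1:ℝ):ℂ)/c) * E1 - (1/c^2 - 1/c + ((0:ℝ):ℂ)/c) * 1)
      = (E1 + E2 - 2) / c ^ 2 := by
    push_cast
    field_simp
    ring
  rw [expand, h2cos, hcc]
  push_cast
  field_simp
  ring

lemma g_cont (s : ℝ) :
    Continuous fun x : ℝ => Complex.exp (-(Complex.I * ((x : ℂ) * (s : ℂ)))) * (tri x : ℂ) := by
  apply Continuous.mul
  · exact Complex.continuous_exp.comp (by fun_prop)
  · exact Complex.continuous_ofReal.comp tri_continuous

lemma tri_fourier (s : ℝ) :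
    ∫ x : ℝ, Complex.exp (-(Complex.I * ((x : ℂ) * (s : ℂ)))) * (tri x : ℂ) = (Kre s : ℂ) := by
  set g : ℝ → ℂ := fun x => Complex.exp (-(Complex.I * ((x : ℂ) * (s : ℂ)))) * (tri x : ℂ)
    with hg
  have hz : ∀ x ∉ Set.Icc (-1:ℝ) 1, g x = 0 := by
    intro x hx
    have : 1 ≤ |x| := by
      by_contra hcon
      push_neg at hcon
      have h2 := abs_lt.mp hcon
      exact hx ⟨h2.1.le, h2.2.le⟩
    simp [hg, tri_eq_zero this]
  have step1 : ∫ x : ℝ, g x = ∫ x in (-1:ℝ)..1, g x := by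
    rw [← setIntegral_eq_integral_of_forall_compl_eq_zero hz,
      integral_Icc_eq_integral_Ioc, ← intervalIntegral.integral_of_le (by norm_num : (-1:ℝ) ≤ 1)]
  have step2 : ∫ x in (-1:ℝ)..1, g x = (∫ x in (-1:ℝ)..0, g x) + ∫ x in (0:ℝ)..1, g x :=
    (intervalIntegral.integral_add_adjacent_intervals
      ((g_cont s).intervalIntegrable _ _) ((g_cont s).intervalIntegrable _ _)).symm
  rw [step1, step2]
  rcases eq_or_ne s 0 with rfl | hs
  · have e1 : ∫ x in (0:ℝ)..1, g x = ((∫ x in (0:ℝ)..1, tri x : ℝ) : ℂ) := by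
      rw [← intervalIntegral.integral_ofReal]
      apply intervalIntegral.integral_congr
      intro x _
      simp [hg]
    have e2 : ∫ x in (-1:ℝ)..0, g x = ((∫ x in (-1:ℝ)..0, tri x : ℝ) : ℂ) := by
      rw [← intervalIntegral.integral_ofReal]
      apply intervalIntegral.integral_congr
      intro x _
      simp [hg]
    rw [e1, e2, tri_int_right, tri_int_left]
    norm_num [Kre]
  · set c : ℂ := Complex.I * s with hc
    have hcne : c ≠ 0 := c_ne_zero hs
    have e1 : ∫ x in (0:ℝ)..1, g x
        = ∫ x in (0:ℝ)..1, (1 - (x : ℂ)) * Complex.exp (-(c * x)) := by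
      apply intervalIntegral.integral_congr
      intro x hx
      rw [Set.uIcc_of_le (by norm_num : (0:ℝ) ≤ 1)] at hx
      rw [hg]
      simp only
      rw [tri_eq_on_right hx]
      push_cast
      ring_nf
      rw [hc]
      ring_nf
    have e2 : ∫ x in (-1:ℝ)..0, g x
        = ∫ x in (-1:ℝ)..0, (1 + (x : ℂ)) * Complex.exp (-(c * x)) := by
      apply intervalIntegral.integral_congr
      intro x hx
      rw [Set.uIcc_of_le (by norm_num : (-1:ℝ) ≤ 0)] at hx
      rw [hg]
      simp only
      rw [tri_eq_on_left hx]
      push_cast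
      ring_nf
      rw [hc]
      ring_nf
    have ftc1 := intervalIntegral.integral_eq_sub_of_hasDerivAt (a := (0:ℝ)) (b := 1)
      (f := fun y : ℝ => (1 / c ^ 2 - 1 / c + (y : ℂ) / c) * Complex.exp (-(c * y)))
      (f' := fun x : ℝ => (1 - (x : ℂ)) * Complex.exp (-(c * x)))
      (fun x _ => antider_pos hs x)
      (by
        apply Continuous.intervalIntegrable
        exact (Continuous.mul (by fun_prop) (Complex.continuous_exp.comp (by fun_prop))))
    have ftc2 := intervalIntegral.integral_eq_sub_of_hasDerivAt (a := (-1:ℝ)) (b := 0)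
      (f := fun y : ℝ => (-(1 / c ^ 2) - 1 / c - (y : ℂ) / c) * Complex.exp (-(c * y)))
      (f' := fun x : ℝ => (1 + (x : ℂ)) * Complex.exp (-(c * x)))
      (fun x _ => antider_neg hs x)
      (by
        apply Continuous.intervalIntegrable
        exact (Continuous.mul (by fun_prop) (Complex.continuous_exp.comp (by fun_prop))))
    rw [e1, e2, ftc1, ftc2]
    have h2cos : Complex.exp (-(c * ((1:ℝ) : ℂ))) + Complex.exp (-(c * ((-1:ℝ) : ℂ)))
        = 2 * (Real.cos s : ℂ) := by
      rw [hc]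
      push_cast
      rw [show -(Complex.I * (s:ℂ) * 1) = -(s:ℂ) * Complex.I by ring,
        show -(Complex.I * (s:ℂ) * (-1)) = (s:ℂ) * Complex.I by ring,
        add_comm, ← Complex.two_cos]
    have hcc : c ^ 2 = -((s : ℂ) ^ 2) := by
      rw [hc, mul_pow, Complex.I_sq]
      ring
    have hKre : Kre s = 2 * (1 - Real.cos s) / s ^ 2 := if_neg hs
    rw [hKre]
    exact final_comb hcne hs hcc h2cos

lemma tri_zero_outside {x : ℝ} (hx : x ∉ Set.Icc (-1:ℝ) 1) : tri x = 0 := by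
  apply tri_eq_zero
  by_contra hcon
  push_neg at hcon
  have h2 := abs_lt.mp hcon
  exact hx ⟨h2.1.le, h2.2.le⟩

lemma integral_eq_sum_intervals {E : Type*} [NormedAddCommGroup E] [NormedSpace ℝ E]
    (g : ℝ → E) (hg : Continuous g) (hz : ∀ x ∉ Set.Icc (-1:ℝ) 1, g x = 0) :
    ∫ x : ℝ, g x = (∫ x in (-1:ℝ)..0, g x) + ∫ x in (0:ℝ)..1, g x := by
  rw [← setIntegral_eq_integral_of_forall_compl_eq_zero hz,
    integral_Icc_eq_integral_Ioc, ← intervalIntegral.integral_of_le (by norm_num : (-1:ℝ) ≤ 1)]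
  exact (intervalIntegral.integral_add_adjacent_intervals
    (hg.intervalIntegrable _ _) (hg.intervalIntegrable _ _)).symm

lemma integral_tri_sq : ∫ y : ℝ, tri y ^ 2 = 2/3 := by
  rw [integral_eq_sum_intervals (fun y => tri y ^ 2) (tri_continuous.pow 2)
    (fun x hx => by rw [tri_zero_outside hx]; norm_num),
    tri_sq_int_left, tri_sq_int_right]
  norm_num

lemma abs_coord_le_norm {m : ℕ} (v : EuclideanSpace ℝ (Fin m)) (i : Fin m) : |v i| ≤ ‖v‖ := by
  rw [EuclideanSpace.norm_eq, ← Real.sqrt_sq_eq_abs]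
  apply Real.sqrt_le_sqrt
  have : (v i) ^ 2 = ‖v i‖ ^ 2 := by rw [Real.norm_eq_abs, _root_.sq_abs]
  rw [this]
  exact Finset.single_le_sum (f := fun j => ‖v j‖ ^ 2) (fun j _ => by positivity)
    (Finset.mem_univ i)

lemma cube_compact (m : ℕ) :
    IsCompact {x : EuclideanSpace ℝ (Fin m) | ∀ i : Fin m, x i ∈ Set.Icc (-1:ℝ) 1} := by
  apply Metric.isCompact_of_isClosed_isBounded
  · have : {x : EuclideanSpace ℝ (Fin m) | ∀ i : Fin m, x i ∈ Set.Icc (-1:ℝ) 1}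
        = ⋂ i : Fin m, (EuclideanSpace.proj (𝕜 := ℝ) i) ⁻¹' Set.Icc (-1:ℝ) 1 := by
      ext x; simp [Set.mem_iInter]
    rw [this]
    exact isClosed_iInter fun i => isClosed_Icc.preimage (EuclideanSpace.proj i).continuous
  · apply (Metric.isBounded_closedBall (x := (0 : EuclideanSpace ℝ (Fin m)))
      (r := Real.sqrt m)).subset
    intro x hx
    rw [Metric.mem_closedBall, dist_zero_right, EuclideanSpace.norm_eq]
    apply Real.sqrt_le_sqrt
    calc ∑ i, ‖x i‖ ^ 2 ≤ ∑ _i : Fin m, (1:ℝ) := by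
          apply Finset.sum_le_sum
          intro i _
          have h1 := (hx i).1; have h2 := (hx i).2
          rw [Real.norm_eq_abs]
          nlinarith [_root_.sq_abs (x i), abs_nonneg (x i)]
      _ = m := by simp

noncomputable def Fmain (m : ℕ) (lam : ℝ) (i0 : Fin m) : EuclideanSpace ℝ (Fin m) → ℂ :=
  fun x => ((Real.sqrt (3/2) ^ m : ℝ) : ℂ)
    * Complex.exp (Complex.I * ((lam : ℂ) * ((x i0 : ℝ) : ℂ)))
    * ∏ i, ((tri (x i) : ℝ) : ℂ)

lemma Fmain_cont (m : ℕ) (lam : ℝ) (i0 : Fin m) : Continuous (Fmain m lam i0) := by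
  unfold Fmain
  apply Continuous.mul
  · apply Continuous.mul continuous_const
    apply Complex.continuous_exp.comp
    have : Continuous fun x : EuclideanSpace ℝ (Fin m) => x i0 :=
      (EuclideanSpace.proj (𝕜 := ℝ) i0).continuous
    fun_prop
  · apply continuous_finset_prod
    intro i _
    have : Continuous fun x : EuclideanSpace ℝ (Fin m) => x i :=
      (EuclideanSpace.proj (𝕜 := ℝ) i).continuous
    exact Complex.continuous_ofReal.comp (tri_continuous.comp this)

lemma Fmain_zero_outside (m : ℕ) (lam : ℝ) (i0 : Fin m)
    {x : EuclideanSpace ℝ (Fin m)} (hx : x ∉ {x : EuclideanSpace ℝ (Fin m) |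
      ∀ i : Fin m, x i ∈ Set.Icc (-1:ℝ) 1}) : Fmain m lam i0 x = 0 := by
  simp only [Set.mem_setOf_eq, not_forall] at hx
  obtain ⟨i, hi⟩ := hx
  unfold Fmain
  rw [Finset.prod_eq_zero (Finset.mem_univ i) (by rw [tri_zero_outside hi]; norm_num)]
  ring

lemma Fmain_support (m : ℕ) (lam : ℝ) (i0 : Fin m) :
    Function.support (Fmain m lam i0) ⊆
      {x : EuclideanSpace ℝ (Fin m) | ∀ i : Fin m, x i ∈ Set.Icc (-1:ℝ) 1} := by
  intro x hx
  by_contra hcon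
  exact hx (Fmain_zero_outside m lam i0 hcon)

lemma Fmain_hcs (m : ℕ) (lam : ℝ) (i0 : Fin m) : HasCompactSupport (Fmain m lam i0) :=
  HasCompactSupport.intro (cube_compact m) (fun _ hx => Fmain_zero_outside m lam i0 hx)

lemma Fmain_memLp (m : ℕ) (lam : ℝ) (i0 : Fin m) : MemLp (Fmain m lam i0) 2 volume :=
  (Fmain_cont m lam i0).memLp_of_hasCompactSupport (Fmain_hcs m lam i0)

lemma fourier_eval (m : ℕ) (lam : ℝ) (i0 : Fin m) (ξ : EuclideanSpace ℝ (Fin m)) :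
    fourierNC (Fmain m lam i0) ξ
      = ((Real.sqrt (3/2) ^ m * ∏ i, Kre (ξ i - if i = i0 then lam else 0) : ℝ) : ℂ) := by
  set A : ℝ := Real.sqrt (3/2) ^ m with hA
  set t : Fin m → ℝ := fun i => ξ i - if i = i0 then lam else 0 with ht
  have pointwise : ∀ x : EuclideanSpace ℝ (Fin m),
      Complex.exp (-(Complex.I * ((inner ℝ x ξ : ℝ) : ℂ))) * Fmain m lam i0 x
        = (A : ℂ) * ∏ i, (Complex.exp (-(Complex.I * (((x i : ℝ) : ℂ) * ((t i : ℝ) : ℂ))))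
            * ((tri (x i) : ℝ) : ℂ)) := by
    intro x
    rw [Finset.prod_mul_distrib, ← Complex.exp_sum]
    have hinner : (inner ℝ x ξ : ℝ) = ∑ i, x i * ξ i := by
      simp [PiLp.inner_apply, RCLike.inner_apply, conj_trivial, mul_comm]
    have hsum : ∑ i, x i * t i = (inner ℝ x ξ : ℝ) - lam * x i0 := by
      rw [hinner, ht]
      simp only
      have expand : ∀ i : Fin m, x i * (ξ i - if i = i0 then lam else 0)
          = x i * ξ i - (if i = i0 then x i * lam else 0) := by
        intro i
        split_ifs <;> ring
      rw [Finset.sum_congr rfl (fun i _ => expand i), Finset.sum_sub_distrib,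
        Finset.sum_ite_eq' Finset.univ i0 (fun i => x i * lam)]
      simp [mul_comm]
    have hphase : ∑ i, -(Complex.I * (((x i : ℝ) : ℂ) * ((t i : ℝ) : ℂ)))
        = -(Complex.I * ((inner ℝ x ξ : ℝ) : ℂ)) + Complex.I * ((lam : ℂ) * ((x i0 : ℝ) : ℂ)) := by
      have h1 : ∑ i, -(Complex.I * (((x i : ℝ) : ℂ) * ((t i : ℝ) : ℂ)))
          = -(Complex.I * ((∑ i, x i * t i : ℝ) : ℂ)) := by
        push_cast
        rw [Finset.mul_sum, ← Finset.sum_neg_distrib]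
      rw [h1, hsum]
      push_cast
      ring
    rw [hphase, Complex.exp_add]
    unfold Fmain
    rw [← hA]
    ring
  unfold fourierNC
  calc ∫ x, Complex.exp (-(Complex.I * ((inner ℝ x ξ : ℝ) : ℂ))) * Fmain m lam i0 x
      = ∫ x : EuclideanSpace ℝ (Fin m), (A : ℂ) * ∏ i,
          (Complex.exp (-(Complex.I * (((x i : ℝ) : ℂ) * ((t i : ℝ) : ℂ))))
            * ((tri (x i) : ℝ) : ℂ)) := by
        congr 1
        funext x
        exact pointwise x
    _ = (A : ℂ) * ∫ x : EuclideanSpace ℝ (Fin m), ∏ i,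
          (Complex.exp (-(Complex.I * (((x i : ℝ) : ℂ) * ((t i : ℝ) : ℂ))))
            * ((tri (x i) : ℝ) : ℂ)) := integral_const_mul _ _
    _ = (A : ℂ) * ∫ y : Fin m → ℝ, ∏ i,
          (Complex.exp (-(Complex.I * (((y i : ℝ) : ℂ) * ((t i : ℝ) : ℂ))))
            * ((tri (y i) : ℝ) : ℂ)) := by
        rw [← (EuclideanSpace.volume_preserving_symm_measurableEquiv_toLp (Fin m)).integral_comp'
          (fun y : Fin m → ℝ => ∏ i,
            (Complex.exp (-(Complex.I * (((y i : ℝ) : ℂ) * ((t i : ℝ) : ℂ))))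
              * ((tri (y i) : ℝ) : ℂ)))]
        rfl
    _ = (A : ℂ) * ∏ i, ∫ y : ℝ,
          (Complex.exp (-(Complex.I * ((y : ℂ) * ((t i : ℝ) : ℂ)))) * ((tri y : ℝ) : ℂ)) := by
        rw [MeasureTheory.integral_fintype_prod_volume_eq_prod
          (f := fun i (y : ℝ) =>
            Complex.exp (-(Complex.I * ((y : ℂ) * ((t i : ℝ) : ℂ)))) * ((tri y : ℝ) : ℂ))]
    _ = (A : ℂ) * ∏ i, ((Kre (t i) : ℝ) : ℂ) := by
        congr 1
        exact Finset.prod_congr rfl (fun i _ => tri_fourier (t i))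
    _ = ((A * ∏ i, Kre (t i) : ℝ) : ℂ) := by
        push_cast
        ring

lemma Fmain_norm_sq (m : ℕ) (lam : ℝ) (i0 : Fin m) (x : EuclideanSpace ℝ (Fin m)) :
    ‖Fmain m lam i0 x‖ ^ 2 = ∏ i, (3/2 * tri (x i) ^ 2) := by
  unfold Fmain
  rw [norm_mul, norm_mul]
  have h1 : ‖((Real.sqrt (3/2) ^ m : ℝ) : ℂ)‖ = Real.sqrt (3/2) ^ m := by
    rw [Complex.norm_real, Real.norm_eq_abs, _root_.abs_of_nonneg (by positivity)]
  have h2 : ‖Complex.exp (Complex.I * ((lam : ℂ) * ((x i0 : ℝ) : ℂ)))‖ = 1 := by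
    rw [Complex.norm_exp]
    simp
  have h3 : ‖∏ i, ((tri (x i) : ℝ) : ℂ)‖ = ∏ i, tri (x i) := by
    rw [← Complex.ofReal_prod, Complex.norm_real, Real.norm_eq_abs,
      _root_.abs_of_nonneg (Finset.prod_nonneg fun i _ => tri_nonneg _)]
  rw [h1, h2, h3, mul_one, mul_pow, ← Finset.prod_pow]
  have h4 : (Real.sqrt (3/2) ^ m) ^ 2 = ∏ _i : Fin m, (3/2 : ℝ) := by
    rw [Finset.prod_const, Finset.card_univ, Fintype.card_fin, ← pow_mul, mul_comm m 2, pow_mul,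
      Real.sq_sqrt (by norm_num : (3/2:ℝ) ≥ 0)]
  rw [h4, ← Finset.prod_mul_distrib]

lemma Fmain_int_norm_sq (m : ℕ) (lam : ℝ) (i0 : Fin m) :
    ∫ x : EuclideanSpace ℝ (Fin m), ‖Fmain m lam i0 x‖ ^ 2 = 1 := by
  calc ∫ x : EuclideanSpace ℝ (Fin m), ‖Fmain m lam i0 x‖ ^ 2
      = ∫ x : EuclideanSpace ℝ (Fin m), ∏ i, (3/2 * tri (x i) ^ 2) := by
        congr 1
        funext x
        exact Fmain_norm_sq m lam i0 x
    _ = ∫ y : Fin m → ℝ, ∏ i, (3/2 * tri (y i) ^ 2) := by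
        rw [← (EuclideanSpace.volume_preserving_symm_measurableEquiv_toLp (Fin m)).integral_comp'
          (fun y : Fin m → ℝ => ∏ i, (3/2 * tri (y i) ^ 2))]
        rfl
    _ = ∏ _i : Fin m, ∫ y : ℝ, 3/2 * tri y ^ 2 := by
        rw [MeasureTheory.integral_fintype_prod_volume_eq_prod
          (f := fun _ (y : ℝ) => 3/2 * tri y ^ 2)]
    _ = 1 := by
        have : ∫ y : ℝ, 3/2 * tri y ^ 2 = 1 := by
          rw [integral_const_mul, integral_tri_sq]
          norm_num
        simp [this]

lemma Fmain_eLpNorm (m : ℕ) (lam : ℝ) (i0 : Fin m) :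
    eLpNorm (Fmain m lam i0) 2 volume = 1 := by
  rw [(Fmain_memLp m lam i0).eLpNorm_eq_integral_rpow_norm two_ne_zero ENNReal.ofNat_ne_top]
  have h1 : ((2 : ENNReal)).toReal = 2 := by norm_num
  rw [h1]
  have h2 : ∫ a : EuclideanSpace ℝ (Fin m), ‖Fmain m lam i0 a‖ ^ (2:ℝ)
      = ∫ a : EuclideanSpace ℝ (Fin m), ‖Fmain m lam i0 a‖ ^ (2:ℕ) := by
    congr 1
    funext a
    rw [show ((2:ℝ)) = ((2:ℕ) : ℝ) by norm_num, Real.rpow_natCast]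
  rw [h2, Fmain_int_norm_sq]
  norm_num

theorem statement0 (m : ℕ) (hm : 0 < m) :
    ∃ c₁ : ℝ, 0 < c₁ ∧ ∀ lam : ℝ, 0 ≤ lam →
      ∃ f : EuclideanSpace ℝ (Fin m) → ℂ,
        MemLp f 2 volume ∧ eLpNorm f 2 volume = 1 ∧
        Function.support f ⊆ {x | ∀ i : Fin m, x i ∈ Set.Icc (-1 : ℝ) 1} ∧
        (∀ ξ, 0 ≤ (fourierNC f ξ).re ∧ (fourierNC f ξ).im = 0) ∧
        (∀ ξ : EuclideanSpace ℝ (Fin m),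
          ‖ξ - lam • EuclideanSpace.single (⟨0, hm⟩ : Fin m) (1 : ℝ)‖ ≤ 1 →
            c₁ ≤ (fourierNC f ξ).re) := by
  refine ⟨(Real.sqrt (3/2) * (43/48)) ^ m, by positivity, ?_⟩
  intro lam _
  set i0 : Fin m := ⟨0, hm⟩ with hi0
  refine ⟨Fmain m lam i0, Fmain_memLp m lam i0, Fmain_eLpNorm m lam i0,
    Fmain_support m lam i0, ?_, ?_⟩
  · intro ξ
    rw [fourier_eval]
    refine ⟨?_, Complex.ofReal_im _⟩
    rw [Complex.ofReal_re]
    exact mul_nonneg (by positivity) (Finset.prod_nonneg fun i _ => Kre_nonneg _)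
  · intro ξ hξ
    rw [fourier_eval, Complex.ofReal_re]
    have hcoord : ∀ i : Fin m, |ξ i - if i = i0 then lam else 0| ≤ 1 := by
      intro i
      have h1 : (ξ - lam • EuclideanSpace.single i0 (1:ℝ)) i
          = ξ i - if i = i0 then lam else 0 := by
        simp only [PiLp.sub_apply, PiLp.smul_apply, EuclideanSpace.single_apply, smul_eq_mul]
        split_ifs <;> ring
      calc |ξ i - if i = i0 then lam else 0|
          = |(ξ - lam • EuclideanSpace.single i0 (1:ℝ)) i| := by rw [h1]
        _ ≤ ‖ξ - lam • EuclideanSpace.single i0 (1:ℝ)‖ := abs_coord_le_norm _ i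
        _ ≤ 1 := hξ
    rw [mul_pow]
    apply mul_le_mul_of_nonneg_left _ (by positivity)
    calc ((43:ℝ)/48) ^ m = ∏ _i : Fin m, ((43:ℝ)/48) := by
          rw [Finset.prod_const, Finset.card_univ, Fintype.card_fin]
      _ ≤ ∏ i, Kre (ξ i - if i = i0 then lam else 0) :=
          Finset.prod_le_prod (fun _ _ => by norm_num) (fun i _ => Kre_lower (hcoord i))
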